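/- Let V be a finite-dimensional real inner product space, W a finite-dimensional real vector space, and c : V → End(W) a linear map satisfying the Clifford relation c(v) ∘ c(v) = -‖v‖² · id_W for all v ∈ V. Let X : ℝ → V be differentiable at t ∈ ℝ, write A(s) = c(X(s)), let A'(t) denote the derivative of A at t, and let g(s) = ‖X(s)‖². Then tr(A(t) ∘ A'(t) ∘ A(t) ∘ A'(t)) = ( (1/2) (g'(t))² - ‖X(t)‖² ‖X'(t)‖² ) · tr(id_W), where tr denotes the trace of endomorphisms of W. (This is item (4) of Lemma 3.7 of the paper: tr[c(X) ∂_{x_j}[c(X)] c(X) ∂_{x_j}[c(X)]] = ((1/2)|X|⁸ (∂_{x_j}(|X|⁻²))² - |X|² |∇_{e_j}X|²) tr[id], stated along one coordinate direction.) -/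

import Mathlib

open ContinuousLinearMap

/-- Lemma 3.7(4): if `c : V → End(W)` is linear with `c(v)² = -‖v‖² id`, `X : ℝ → V`
is differentiable at `t`, `A(s) = c(X(s))` and `g(s) = ‖X(s)‖²`, then
`tr(A(t) ∘ A'(t) ∘ A(t) ∘ A'(t)) = ((1/2) g'(t)² - ‖X(t)‖² ‖X'(t)‖²) · tr(id_W)`. -/
theorem trace_clifford_derivClifford_clifford_derivClifford
    {V W : Type*} [NormedAddCommGroup V] [InnerProductSpace ℝ V]
    [FiniteDimensional ℝ V]
    [NormedAddCommGroup W] [NormedSpace ℝ W] [FiniteDimensional ℝ W]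
    (c : V →ₗ[ℝ] (W →L[ℝ] W))
    (hc : ∀ v : V, (c v).comp (c v) = -‖v‖ ^ 2 • ContinuousLinearMap.id ℝ W)
    (X : ℝ → V) (t : ℝ) (hX : DifferentiableAt ℝ X t)
    (A : ℝ → (W →L[ℝ] W)) (hA : A = fun s => c (X s))
    (g : ℝ → ℝ) (hg : g = fun s => ‖X s‖ ^ 2) :
    LinearMap.trace ℝ W
        (((A t).comp ((deriv A t).comp ((A t).comp (deriv A t)))).toLinearMap)
      = ((1 / 2) * (deriv g t) ^ 2 - ‖X t‖ ^ 2 * ‖deriv X t‖ ^ 2) *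
        LinearMap.trace ℝ W (LinearMap.id : W →ₗ[ℝ] W) := by
  have hX' : HasDerivAt X (deriv X t) t := hX.hasDerivAt
  set x := X t with hx
  set y := deriv X t with hy
  set p : ℝ := inner ℝ x y with hp
  -- derivative of A
  have hA' : deriv A t = c y := by
    have hL : HasDerivAt A (c y) t := by
      rw [hA]
      exact
        ((LinearMap.toContinuousLinearMap c).hasFDerivAt.comp_hasDerivAt t hX')
    exact hL.deriv
  -- derivative of g
  have hg' : deriv g t = 2 * p := by
    have : HasDerivAt g (2 * p) t := by
      rw [hg]; exact hX'.norm_sq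
    exact this.deriv
  -- pass to linear maps
  set a : Module.End ℝ W := (c x).toLinearMap with ha'
  set b : Module.End ℝ W := (c y).toLinearMap with hb'
  have ha : a * a = (-‖x‖ ^ 2) • 1 := by
    have := congrArg ContinuousLinearMap.toLinearMap (hc x)
    simpa [← Module.End.mul_eq_comp, Module.End.one_eq_id] using this
  have hb : b * b = (-‖y‖ ^ 2) • 1 := by
    have := congrArg ContinuousLinearMap.toLinearMap (hc y)
    simpa [← Module.End.mul_eq_comp, Module.End.one_eq_id] using this
  have hab : a * b + b * a = (-(2 * p)) • 1 := by
    have h1 := congrArg ContinuousLinearMap.toLinearMap (hc (x + y))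
    have hxy := congrArg ContinuousLinearMap.toLinearMap (hc x)
    have hyy := congrArg ContinuousLinearMap.toLinearMap (hc y)
    simp only [map_add, add_comp, comp_add, toLinearMap_comp, coe_smul', coe_id',
      ContinuousLinearMap.coe_add, ContinuousLinearMap.coe_smul] at h1 hxy hyy
    have hn : ‖x + y‖ ^ 2 = ‖x‖ ^ 2 + 2 * p + ‖y‖ ^ 2 := norm_add_sq_real x y
    rw [hn] at h1
    rw [← Module.End.mul_eq_comp, ← Module.End.mul_eq_comp, ← Module.End.mul_eq_comp,
      ← Module.End.mul_eq_comp, ← ha', ← hb', ContinuousLinearMap.coe_id] at h1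
    have h2 : a * a + (a * b + (b * a + b * b))
        = (-(‖x‖ ^ 2 + 2 * p + ‖y‖ ^ 2)) • 1 := by
      rw [Module.End.one_eq_id]
      linear_combination (norm := module) h1
    rw [ha, hb] at h2
    have : a * b + b * a
        = (-(‖x‖ ^ 2 + 2 * p + ‖y‖ ^ 2)) • (1 : Module.End ℝ W)
          - (-‖x‖ ^ 2) • 1 - (-‖y‖ ^ 2) • 1 := by
      rw [← h2]; abel
    rw [this, hp]
    module
  have hba : b * a = (-(2 * p)) • 1 - a * b := by
    rw [← hab]; abel
  have key : a * b * (a * b)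
      = (-(2 * p)) • (a * b) + (-(‖x‖ ^ 2 * ‖y‖ ^ 2)) • 1 := by
    have e1 : a * b * (a * b) = a * (b * a) * b := by
      simp [mul_assoc]
    have e2 : a * (a * b) * b = (‖x‖ ^ 2 * ‖y‖ ^ 2) • 1 := by
      have e3 : a * (a * b) * b = (a * a) * (b * b) := by
        simp [mul_assoc]
      rw [e3, ha, hb, smul_mul_assoc, mul_smul_comm, one_mul, smul_smul]
      norm_num
    rw [e1, hba, mul_sub, sub_mul, mul_smul_comm, smul_mul_assoc, mul_one, e2]
    module
  have htr_ab : LinearMap.trace ℝ W (a * b) = (-p) * LinearMap.trace ℝ W 1 := by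
    have h3 := congrArg (LinearMap.trace ℝ W) hab
    rw [map_add, LinearMap.trace_mul_comm, map_smul] at h3
    have : (2 : ℝ) * LinearMap.trace ℝ W (b * a)
        = (-(2 * p)) * LinearMap.trace ℝ W 1 := by
      rw [two_mul]; simpa [smul_eq_mul] using h3
    rw [LinearMap.trace_mul_comm] at this
    linarith
  -- main computation
  have hgoal : LinearMap.trace ℝ W (a * b * (a * b))
      = (2 * p ^ 2 - ‖x‖ ^ 2 * ‖y‖ ^ 2) * LinearMap.trace ℝ W 1 := by
    rw [key, map_add, map_smul, map_smul, htr_ab, smul_eq_mul, smul_eq_mul]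
    ring
  have hLHS : (((A t).comp ((deriv A t).comp ((A t).comp (deriv A t)))).toLinearMap)
      = a * b * (a * b) := by
    rw [hA', hA]
    simp [ha', hb', ← Module.End.mul_eq_comp, mul_assoc]
    rfl
  rw [hLHS, hgoal, hg']
  have h1 : (LinearMap.id : W →ₗ[ℝ] W) = 1 := rfl
  rw [h1]
  ring
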